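/- Suppose for each x, the random variables P^{(M)}(x) satisfy the Bernstein-type tail bound ℙ(|P^{(M)}(x) - P^{(n)}(x)| ≥ ε) ≤ 2·exp(-ε² / (2εα_{n+1}/3 + (1/2)Σ_{i=n+1}^M α_i²)) for all M > n and ε > 0, where α_k = (2-1/k)/(k+1), and that P^{(M)}(x) converges almost surely to P^{(∞)}(x) as M → ∞. Then for every δ ∈ (0,1) there exist K > 0 and N such that for all n > N, ℙ(|P^{(∞)}(x) - P^{(n)}(x)| ≤ K·n^{-1/2}) ≥ 1 - δ; i.e., P^{(∞)}(x) - P^{(n)}(x) = O_p(n^{-1/2}). -/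

import Mathlib

open MeasureTheory Filter

lemma sum_inv_sq_aux (n : ℕ) (hn : 1 ≤ n) (M : ℕ) (hM : n ≤ M) :
    ∑ i ∈ Finset.Icc (n+1) M, (1:ℝ)/(i:ℝ)^2 ≤ 1/(n:ℝ) - 1/(M:ℝ) := by
  induction M, hM using Nat.le_induction with
  | base =>
    rw [Finset.Icc_eq_empty_of_lt (Nat.lt_succ_self n)]
    simp
  | succ M hM ih =>
    rw [Finset.sum_Icc_succ_top (by omega)]
    have hM1 : (1:ℝ) ≤ (M:ℝ) := by exact_mod_cast hn.trans hM
    have hM0 : (0:ℝ) < (M:ℝ) := by linarith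
    have key : (1:ℝ)/((M:ℝ)+1)^2 ≤ 1/(M:ℝ) - 1/((M:ℝ)+1) := by
      rw [div_sub_div _ _ (ne_of_gt hM0) (by positivity)]
      rw [div_le_div_iff₀ (by positivity) (by positivity)]
      nlinarith
    push_cast
    push_cast at ih
    linarith

lemma sum_inv_sq_le (n : ℕ) (hn : 1 ≤ n) (M : ℕ) :
    ∑ i ∈ Finset.Icc (n+1) M, (1:ℝ)/(i:ℝ)^2 ≤ 1/(n:ℝ) := by
  rcases le_or_gt n M with h | h
  · have h2 := sum_inv_sq_aux n hn M h
    have hM0 : (0:ℝ) < (M:ℝ) := by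
      have : 1 ≤ M := hn.trans h
      exact_mod_cast this
    have : (0:ℝ) ≤ 1/(M:ℝ) := by positivity
    linarith
  · rw [Finset.Icc_eq_empty_of_lt (by omega)]
    simp only [Finset.sum_empty]
    positivity

/-- Given the Bernstein-type tail bound for the R-BP martingale and a.s. convergence
`P^(M)(x) → P^(∞)(x)`, the error `P^(∞)(x) - P^(n)(x)` is `O_p(n^{-1/2})`. -/
theorem stmt3 {Ω : Type*} [MeasurableSpace Ω] (μ : Measure Ω) [IsProbabilityMeasure μ]
    (P : ℕ → Ω → ℝ) (Pinf : Ω → ℝ)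
    (α : ℕ → ℝ) (hα : ∀ k : ℕ, 1 ≤ k → α k = (2 - 1/(k:ℝ)) * (1/((k:ℝ)+1)))
    (htail : ∀ n M : ℕ, n < M → ∀ ε : ℝ, 0 < ε →
      μ {ω | ε ≤ |P M ω - P n ω|} ≤
        ENNReal.ofReal (2 * Real.exp (-(ε^2) /
          (2 * ε * α (n+1) / 3 + (1/2) * ∑ i ∈ Finset.Icc (n+1) M, (α i)^2))))
    (hconv : ∀ᵐ ω ∂μ, Tendsto (fun M => P M ω) atTop (nhds (Pinf ω))) :
    ∀ δ : ℝ, 0 < δ → δ < 1 → ∃ K : ℝ, 0 < K ∧ ∃ N : ℕ, ∀ n : ℕ, N < n →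
      ENNReal.ofReal (1 - δ) ≤
        μ {ω | |Pinf ω - P n ω| ≤ K * (n:ℝ) ^ (-(1:ℝ)/2)} := by
  intro δ hδ0 hδ1
  obtain ⟨t, ht_def⟩ : ∃ t : ℝ, t = Real.log (2/δ) := ⟨_, rfl⟩
  have h2δ : (1:ℝ) < 2/δ := by
    rw [lt_div_iff₀ hδ0]; linarith
  have ht : 0 < t := ht_def ▸ Real.log_pos h2δ
  obtain ⟨K, hK_def⟩ : ∃ K : ℝ, K = 2*t + 3 := ⟨_, rfl⟩
  have hK : 0 < K := by rw [hK_def]; positivity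
  refine ⟨K, hK, 1, fun n hn => ?_⟩
  have hn1 : (1:ℝ) ≤ (n:ℝ) := by exact_mod_cast hn.le
  have hn0 : (0:ℝ) < (n:ℝ) := by linarith
  obtain ⟨ε, hε_def⟩ : ∃ ε : ℝ, ε = K * (n:ℝ) ^ (-(1:ℝ)/2) := ⟨_, rfl⟩
  rw [show {ω | |Pinf ω - P n ω| ≤ K * (n:ℝ) ^ (-(1:ℝ)/2)}
      = {ω | |Pinf ω - P n ω| ≤ ε} from by rw [hε_def]]
  have hεpos : 0 < ε := by
    rw [hε_def]
    have := Real.rpow_pos_of_pos hn0 (-(1:ℝ)/2)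
    positivity
  have hεK : ε ≤ K := by
    have h1 : (n:ℝ) ^ (-(1:ℝ)/2) ≤ 1 :=
      Real.rpow_le_one_of_one_le_of_nonpos hn1 (by norm_num)
    calc ε = K * (n:ℝ) ^ (-(1:ℝ)/2) := hε_def
      _ ≤ K * 1 := mul_le_mul_of_nonneg_left h1 hK.le
      _ = K := mul_one K
  have hε2 : ε^2 = K^2 / (n:ℝ) := by
    have h1 : ((n:ℝ) ^ (-(1:ℝ)/2))^2 = (n:ℝ)⁻¹ := by
      rw [← Real.rpow_natCast ((n:ℝ) ^ (-(1:ℝ)/2)) 2, ← Real.rpow_mul hn0.le]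
      norm_num [Real.rpow_neg_one]
    rw [hε_def, mul_pow, h1, div_eq_mul_inv]
  -- bound on α (n+1)
  have hαn_pos : 0 < α (n+1) := by
    rw [hα (n+1) (by omega)]
    push_cast
    have h1 : (0:ℝ) < (n:ℝ) + 1 := by linarith
    have h2 : 1/((n:ℝ)+1) ≤ 1 := by
      rw [div_le_one h1]; linarith
    have h3 : (0:ℝ) < 1/((n:ℝ)+1+1) := by positivity
    nlinarith
  have hαn_le : α (n+1) ≤ 2/(n:ℝ) := by
    rw [hα (n+1) (by omega)]
    push_cast
    have h1 : (0:ℝ) < (n:ℝ) + 1 := by linarith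
    have h2 : 1/((n:ℝ)+1) ≤ 1 := by
      rw [div_le_one h1]; linarith
    have h2' : (0:ℝ) ≤ 1/((n:ℝ)+1) := by positivity
    have h3 : 2 - 1/((n:ℝ)+1) ≤ 2 := by linarith
    have h4 : (0:ℝ) < 1/((n:ℝ)+1+1) := by positivity
    have h5 : 1/((n:ℝ)+1+1) ≤ 1/(n:ℝ) := by
      apply one_div_le_one_div_of_le hn0; linarith
    calc (2 - 1/((n:ℝ)+1)) * (1/((n:ℝ)+1+1)) ≤ 2 * (1/(n:ℝ)) := by
          apply mul_le_mul h3 h5 h4.le (by norm_num)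
      _ = 2/(n:ℝ) := by ring
  -- uniform bound on the exponential
  have hbound : ∀ M : ℕ, n < M →
      2 * Real.exp (-(ε^2) /
        (2 * ε * α (n+1) / 3 + (1/2) * ∑ i ∈ Finset.Icc (n+1) M, (α i)^2)) ≤ δ := by
    intro M hM
    obtain ⟨S, hS_def⟩ : ∃ S : ℝ, S = ∑ i ∈ Finset.Icc (n+1) M, (α i)^2 := ⟨_, rfl⟩
    rw [← hS_def]
    obtain ⟨D, hD_def⟩ : ∃ D : ℝ, D = 2 * ε * α (n+1) / 3 + (1/2) * S := ⟨_, rfl⟩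
    rw [← hD_def]
    have hsum_nonneg : (0:ℝ) ≤ S :=
      hS_def ▸ Finset.sum_nonneg fun i _ => sq_nonneg _
    have hD_pos : 0 < D := by
      have h1 : 0 < 2 * ε * α (n+1) / 3 := by positivity
      rw [hD_def]; linarith
    have hsum_le : S ≤ 4/(n:ℝ) := by
      have hpt : ∀ i ∈ Finset.Icc (n+1) M, (α i)^2 ≤ 4 * ((1:ℝ)/(i:ℝ)^2) := by
        intro i hi
        have hi1 : n + 1 ≤ i := (Finset.mem_Icc.mp hi).1
        have hi1' : (1:ℝ) ≤ (i:ℝ) := by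
          have : 1 ≤ i := by omega
          exact_mod_cast this
        have hi0 : (0:ℝ) < (i:ℝ) := by linarith
        have hα_abs : |α i| ≤ 2/(i:ℝ) := by
          rw [hα i (by omega)]
          have h1 : (0:ℝ) < (i:ℝ) + 1 := by linarith
          have h2 : 1/((i:ℝ)) ≤ 1 := by rw [div_le_one hi0]; linarith
          have h3 : (0:ℝ) ≤ 1/(i:ℝ) := by positivity
          have h6 : (0:ℝ) ≤ 2 - 1/(i:ℝ) := by linarith
          rw [abs_of_nonneg (by positivity : (0:ℝ) ≤ (2 - 1/(i:ℝ)) * (1/((i:ℝ)+1)))]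
          have h5 : 1/((i:ℝ)+1) ≤ 1/(i:ℝ) := by
            apply one_div_le_one_div_of_le hi0; linarith
          calc (2 - 1/(i:ℝ)) * (1/((i:ℝ)+1)) ≤ 2 * (1/(i:ℝ)) := by
                apply mul_le_mul (by linarith) h5 (by positivity) (by norm_num)
            _ = 2/(i:ℝ) := by ring
        calc (α i)^2 = |α i|^2 := (sq_abs _).symm
          _ ≤ (2/(i:ℝ))^2 := by
              apply pow_le_pow_left₀ (abs_nonneg _) hα_abs
          _ = 4 * ((1:ℝ)/(i:ℝ)^2) := by
              rw [div_pow]; ring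
      calc S = ∑ i ∈ Finset.Icc (n+1) M, (α i)^2 := hS_def
        _ ≤ ∑ i ∈ Finset.Icc (n+1) M, 4 * ((1:ℝ)/(i:ℝ)^2) := Finset.sum_le_sum hpt
        _ = 4 * ∑ i ∈ Finset.Icc (n+1) M, (1:ℝ)/(i:ℝ)^2 := by
            rw [Finset.mul_sum]
        _ ≤ 4 * (1/(n:ℝ)) := by
            have := sum_inv_sq_le n (by omega) M
            linarith
        _ = 4/(n:ℝ) := by ring
    have hD_le : D ≤ (4/3*K + 2)/(n:ℝ) := by
      have h1 : 2 * ε * α (n+1) / 3 ≤ 2 * K * (2/(n:ℝ)) / 3 := by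
        have := mul_le_mul hεK hαn_le hαn_pos.le hK.le
        linarith
      have h2 : (1/2) * S ≤ 2/(n:ℝ) := by
        simp only [div_eq_mul_inv] at hsum_le ⊢; linarith
      have h3 : 2 * K * (2/(n:ℝ)) / 3 + 2/(n:ℝ) = (4/3*K + 2)/(n:ℝ) := by
        field_simp; ring
      rw [hD_def]; linarith
    have htD : t ≤ ε^2 / D := by
      rw [le_div_iff₀ hD_pos, hε2]
      have h1 : t * D ≤ t * ((4/3*K + 2)/(n:ℝ)) := mul_le_mul_of_nonneg_left hD_le ht.le
      have h2 : t * ((4/3*K + 2)/(n:ℝ)) ≤ K^2/(n:ℝ) := by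
        rw [show t * ((4/3*K + 2)/(n:ℝ)) = (t * (4/3*K + 2))/(n:ℝ) from by ring]
        gcongr
        rw [hK_def]; nlinarith [sq_nonneg t]
      linarith
    have hexp : Real.exp (-(ε^2) / D) ≤ δ/2 := by
      have h1 : -(ε^2)/D = -(ε^2/D) := by ring
      have h2 : Real.exp (-(ε^2/D)) ≤ Real.exp (-t) :=
        Real.exp_le_exp.mpr (by linarith)
      have h3 : Real.exp (-t) = δ/2 := by
        rw [ht_def, Real.exp_neg, Real.exp_log (by positivity)]
        rw [inv_div]
      rw [h1]; rw [h3] at h2; exact h2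
    linarith
  -- measure-theoretic part
  have hμT : μ {ω | ε < |Pinf ω - P n ω|} ≤ ENNReal.ofReal δ := by
    set C : ℕ → Set Ω := fun j => {ω | ∀ M, j + n + 1 ≤ M → ε ≤ |P M ω - P n ω|} with hC_def
    have hCmono : Monotone C := by
      intro j j' hjj ω hω M hM
      exact hω M (by omega)
    have hGnull : μ {ω | ¬ Tendsto (fun M => P M ω) atTop (nhds (Pinf ω))} = 0 :=
      ae_iff.mp hconv
    have hcover : {ω | ε < |Pinf ω - P n ω|} ⊆
        (⋃ j, C j) ∪ {ω | ¬ Tendsto (fun M => P M ω) atTop (nhds (Pinf ω))} := by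
      intro ω hω
      by_cases htd : Tendsto (fun M => P M ω) atTop (nhds (Pinf ω))
      · left
        have htd2 : Tendsto (fun M => |P M ω - P n ω|) atTop (nhds (|Pinf ω - P n ω|)) :=
          (htd.sub tendsto_const_nhds).abs
        have hev : ∀ᶠ M in atTop, ε < |P M ω - P n ω| :=
          htd2.eventually_const_lt hω
        obtain ⟨j, hj⟩ := eventually_atTop.mp hev
        exact Set.mem_iUnion.mpr ⟨j, fun M hM => (hj M (by omega)).le⟩
      · right; exact htd
    calc μ {ω | ε < |Pinf ω - P n ω|}
        ≤ μ ((⋃ j, C j) ∪ {ω | ¬ Tendsto (fun M => P M ω) atTop (nhds (Pinf ω))}) :=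
          measure_mono hcover
      _ ≤ μ (⋃ j, C j) + μ {ω | ¬ Tendsto (fun M => P M ω) atTop (nhds (Pinf ω))} :=
          measure_union_le _ _
      _ = μ (⋃ j, C j) := by rw [hGnull, add_zero]
      _ = ⨆ j, μ (C j) := (hCmono.directed_le).measure_iUnion
      _ ≤ ENNReal.ofReal δ := by
          apply iSup_le
          intro j
          have hsub : C j ⊆ {ω | ε ≤ |P (j+n+1) ω - P n ω|} := fun ω hω => hω (j+n+1) le_rfl
          calc μ (C j) ≤ μ {ω | ε ≤ |P (j+n+1) ω - P n ω|} := measure_mono hsub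
            _ ≤ ENNReal.ofReal (2 * Real.exp (-(ε^2) /
                  (2 * ε * α (n+1) / 3 + (1/2) * ∑ i ∈ Finset.Icc (n+1) (j+n+1), (α i)^2))) :=
                htail n (j+n+1) (by omega) ε hεpos
            _ ≤ ENNReal.ofReal δ :=
                ENNReal.ofReal_le_ofReal (hbound (j+n+1) (by omega))
  -- conclude
  have hcup : (Set.univ : Set Ω) ⊆
      {ω | |Pinf ω - P n ω| ≤ ε} ∪ {ω | ε < |Pinf ω - P n ω|} := by
    intro ω _
    by_cases h : |Pinf ω - P n ω| ≤ ε
    · left; exact h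
    · right; exact lt_of_not_ge h
  have hone : (1:ENNReal) ≤ μ {ω | |Pinf ω - P n ω| ≤ ε} + μ {ω | ε < |Pinf ω - P n ω|} := by
    calc (1:ENNReal) = μ Set.univ := (measure_univ).symm
      _ ≤ μ ({ω | |Pinf ω - P n ω| ≤ ε} ∪ {ω | ε < |Pinf ω - P n ω|}) := measure_mono hcup
      _ ≤ μ {ω | |Pinf ω - P n ω| ≤ ε} + μ {ω | ε < |Pinf ω - P n ω|} := measure_union_le _ _
  have hfinal : ENNReal.ofReal (1 - δ) + ENNReal.ofReal δ ≤
      μ {ω | |Pinf ω - P n ω| ≤ ε} + ENNReal.ofReal δ := by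
    calc ENNReal.ofReal (1 - δ) + ENNReal.ofReal δ = ENNReal.ofReal 1 := by
          rw [← ENNReal.ofReal_add (by linarith) hδ0.le]; norm_num
      _ = 1 := by simp
      _ ≤ μ {ω | |Pinf ω - P n ω| ≤ ε} + μ {ω | ε < |Pinf ω - P n ω|} := hone
      _ ≤ μ {ω | |Pinf ω - P n ω| ≤ ε} + ENNReal.ofReal δ := add_le_add le_rfl hμT
  exact (ENNReal.add_le_add_iff_right ENNReal.ofReal_ne_top).mp hfinal
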